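/- The normalized divergence NIB^{D,α}(X,Y) = α·(1 − I(X;Y)/min(H(X),H(Y))) + (1−α)·(1 − I(X;Y)/max(H(X),H(Y))) satisfies the relaxed triangle inequality NIB^{D,α}(X,Y) ≤ (1/min(α,1−α))·(NIB^{D,α}(X,Z) + NIB^{D,α}(Y,Z)) for 0 < α < 1 and positive entropies. -/

import Mathlib

open Real

/-- Shannon entropy of a discrete random variable `X` on a finite probability
space with weights `p`. -/
noncomputable def ent {Ω S : Type*} [Fintype Ω] [Fintype S] [DecidableEq S]
    (p : Ω → ℝ) (X : Ω → S) : ℝ :=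
  ∑ s : S, Real.negMulLog (∑ ω ∈ Finset.univ.filter (fun ω => X ω = s), p ω)

/-- Conditional entropy `H(X|Y) = H(X,Y) - H(Y)`. -/
noncomputable def condEnt {Ω S T : Type*} [Fintype Ω] [Fintype S] [Fintype T]
    [DecidableEq S] [DecidableEq T] (p : Ω → ℝ) (X : Ω → S) (Y : Ω → T) : ℝ :=
  ent p (fun ω => (X ω, Y ω)) - ent p Y

/-- Mutual information `I(X;Y) = H(X) + H(Y) - H(X,Y)`. -/
noncomputable def mutualInfo {Ω S T : Type*} [Fintype Ω] [Fintype S] [Fintype T]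
    [DecidableEq S] [DecidableEq T] (p : Ω → ℝ) (X : Ω → S) (Y : Ω → T) : ℝ :=
  ent p X + ent p Y - ent p (fun ω => (X ω, Y ω))

/-- The normalized divergence `NIB^{D,α}`. -/
noncomputable def NIBD {Ω S T : Type*} [Fintype Ω] [Fintype S] [Fintype T]
    [DecidableEq S] [DecidableEq T] (α : ℝ) (p : Ω → ℝ) (X : Ω → S) (Y : Ω → T) : ℝ :=
  α * (1 - mutualInfo p X Y / min (ent p X) (ent p Y)) +
    (1 - α) * (1 - mutualInfo p X Y / max (ent p X) (ent p Y))

section AuxNIBD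

/-- superadditivity of negMulLog over a sum of nonnegatives -/
lemma negMulLog_sum_le' {ι : Type*} [Fintype ι] (g : ι → ℝ) (hg : ∀ i, 0 ≤ g i) :
    Real.negMulLog (∑ i, g i) ≤ ∑ i, Real.negMulLog (g i) := by
  have hS : ∀ i : ι, g i ≤ ∑ j, g j :=
    fun i => Finset.single_le_sum (fun j _ => hg j) (Finset.mem_univ i)
  have h1 : Real.negMulLog (∑ i, g i) = ∑ i, -(g i * Real.log (∑ j, g j)) := by
    rw [Real.negMulLog, neg_mul]
    rw [show ((∑ i : ι, g i) * Real.log (∑ i : ι, g i))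
        = ∑ i : ι, g i * Real.log (∑ j : ι, g j) from Finset.sum_mul _ _ _]
    rw [← Finset.sum_neg_distrib]
  rw [h1]
  apply Finset.sum_le_sum
  intro i _
  rcases eq_or_lt_of_le (hg i) with h | h
  · simp [← h, Real.negMulLog]
  · have hlog : Real.log (g i) ≤ Real.log (∑ j, g j) := Real.log_le_log h (hS i)
    rw [Real.negMulLog, neg_mul]
    nlinarith

/-- Gibbs-type termwise inequality -/
lemma gibbs_term' (a q : ℝ) (ha : 0 ≤ a) (hq : 0 ≤ q) (h : 0 < a → 0 < q) :
    a * Real.log q - a * Real.log a ≤ q - a := by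
  rcases eq_or_lt_of_le ha with h0 | h0
  · simp [← h0, hq]
  · have hq' := h h0
    have hlog : Real.log (q / a) ≤ q / a - 1 := Real.log_le_sub_one_of_pos (by positivity)
    rw [Real.log_div (ne_of_gt hq') (ne_of_gt h0)] at hlog
    have h2 := mul_le_mul_of_nonneg_left hlog (le_of_lt h0)
    rw [mul_sub, mul_sub, mul_div_cancel₀ _ (ne_of_gt h0)] at h2
    linarith

lemma gibbs4' (F b c d : ℝ) (hF : 0 ≤ F) (hFb : F ≤ b) (hFc : F ≤ c) (hd : 0 < d) :
    F * Real.log b + F * Real.log c - F * Real.log d - F * Real.log F ≤ b * c / d - F := by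
  have hb : 0 ≤ b := le_trans hF hFb
  have hc : 0 ≤ c := le_trans hF hFc
  rcases eq_or_lt_of_le hF with h0 | h0
  · rw [← h0]; simp; positivity
  · have hb' : 0 < b := lt_of_lt_of_le h0 hFb
    have hc' : 0 < c := lt_of_lt_of_le h0 hFc
    have key := gibbs_term' F (b * c / d) (le_of_lt h0) (by positivity) (fun _ => by positivity)
    have hlog : Real.log (b * c / d) = Real.log b + Real.log c - Real.log d := by
      rw [Real.log_div (by positivity) (ne_of_gt hd), Real.log_mul (ne_of_gt hb') (ne_of_gt hc')]
    rw [hlog] at key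
    nlinarith [key]

lemma gibbs3' (a b c : ℝ) (ha : 0 ≤ a) (hab : a ≤ b) (hac : a ≤ c) :
    a * Real.log b + a * Real.log c - a * Real.log a ≤ b * c - a := by
  have := gibbs4' a b c 1 ha hab hac one_pos
  simpa using this

section Mass
variable {Ω S T U : Type*} [Fintype Ω] [Fintype S] [Fintype T] [Fintype U]
  [DecidableEq S] [DecidableEq T] [DecidableEq U]

noncomputable def mass (p : Ω → ℝ) (X : Ω → S) (s : S) : ℝ :=
  ∑ ω ∈ Finset.univ.filter (fun ω => X ω = s), p ω

lemma ent_eq (p : Ω → ℝ) (X : Ω → S) : ent p X = ∑ s, Real.negMulLog (mass p X s) := rfl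

lemma mass_nonneg (p : Ω → ℝ) (hp0 : ∀ ω, 0 ≤ p ω) (X : Ω → S) (s : S) :
    0 ≤ mass p X s :=
  Finset.sum_nonneg fun ω _ => hp0 ω

lemma mass_total (p : Ω → ℝ) (X : Ω → S) : ∑ s, mass p X s = ∑ ω, p ω := by
  exact Finset.sum_fiberwise _ _ _

lemma mass_congr (p : Ω → ℝ) (X : Ω → S) (Y : Ω → T) (s : S) (t : T)
    (h : ∀ ω, X ω = s ↔ Y ω = t) : mass p X s = mass p Y t := by
  unfold mass
  congr 1
  ext ω
  simp [h ω]

lemma mass_fst (p : Ω → ℝ) (X : Ω → S) (Y : Ω → T) (s : S) :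
    mass p X s = ∑ t, mass p (fun ω => (X ω, Y ω)) (s, t) := by
  unfold mass
  rw [← Finset.sum_fiberwise (Finset.univ.filter (fun ω => X ω = s)) Y p]
  apply Finset.sum_congr rfl
  intro t _
  rw [Finset.filter_filter]
  apply Finset.sum_congr _ (fun _ _ => rfl)
  ext ω
  simp [Prod.ext_iff]

lemma mass_snd (p : Ω → ℝ) (X : Ω → S) (Y : Ω → T) (t : T) :
    mass p Y t = ∑ s, mass p (fun ω => (X ω, Y ω)) (s, t) := by
  rw [mass_fst p Y X t]
  apply Finset.sum_congr rfl
  intro s _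
  exact mass_congr _ _ _ _ _ (fun ω => by simp [Prod.ext_iff, and_comm])

/-- H(X) ≤ H(X,Y) -/
lemma ent_le_ent_pair_left (p : Ω → ℝ) (hp0 : ∀ ω, 0 ≤ p ω) (X : Ω → S) (Y : Ω → T) :
    ent p X ≤ ent p (fun ω => (X ω, Y ω)) := by
  rw [ent_eq p X, ent_eq p (fun ω => (X ω, Y ω)), Fintype.sum_prod_type]
  apply Finset.sum_le_sum
  intro s _
  rw [mass_fst p X Y s]
  exact negMulLog_sum_le' _ (fun t => mass_nonneg p hp0 _ _)

/-- H(Y) ≤ H(X,Y) -/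
lemma ent_le_ent_pair_right (p : Ω → ℝ) (hp0 : ∀ ω, 0 ≤ p ω) (X : Ω → S) (Y : Ω → T) :
    ent p Y ≤ ent p (fun ω => (X ω, Y ω)) := by
  rw [ent_eq p Y, ent_eq p (fun ω => (X ω, Y ω)), Fintype.sum_prod_type, Finset.sum_comm]
  apply Finset.sum_le_sum
  intro t _
  rw [mass_snd p X Y t]
  exact negMulLog_sum_le' _ (fun s => mass_nonneg p hp0 _ _)

/-- subadditivity: H(X,Y) ≤ H(X) + H(Y), i.e. I(X;Y) ≥ 0 -/
lemma ent_pair_le_add (p : Ω → ℝ) (hp0 : ∀ ω, 0 ≤ p ω) (hp1 : ∑ ω, p ω = 1)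
    (X : Ω → S) (Y : Ω → T) :
    ent p (fun ω => (X ω, Y ω)) ≤ ent p X + ent p Y := by
  set a : S → T → ℝ := fun s t => mass p (fun ω => (X ω, Y ω)) (s, t) with hadef
  have h0 : ∀ s t, 0 ≤ a s t := fun s t => mass_nonneg p hp0 _ _
  have hax : ∀ s, mass p X s = ∑ t, a s t := fun s => mass_fst p X Y s
  have hay : ∀ t, mass p Y t = ∑ s, a s t := fun t => mass_snd p X Y t
  have haX : ∀ s t, a s t ≤ mass p X s := fun s t => by
    rw [hax s]; exact Finset.single_le_sum (fun j _ => h0 s j) (Finset.mem_univ t)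
  have haY : ∀ s t, a s t ≤ mass p Y t := fun s t => by
    rw [hay t]; exact Finset.single_le_sum (fun j _ => h0 j t) (Finset.mem_univ s)
  have e1 : ent p (fun ω => (X ω, Y ω)) = ∑ s, ∑ t, -(a s t * Real.log (a s t)) := by
    rw [ent_eq, Fintype.sum_prod_type]
    simp [Real.negMulLog, neg_mul]
    rfl
  have e2 : ent p X = ∑ s, ∑ t, -(a s t * Real.log (mass p X s)) := by
    rw [ent_eq]
    apply Finset.sum_congr rfl
    intro s _
    rw [Real.negMulLog, neg_mul]
    nth_rewrite 1 [hax s]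
    rw [Finset.sum_mul, ← Finset.sum_neg_distrib]
  have e3 : ent p Y = ∑ s, ∑ t, -(a s t * Real.log (mass p Y t)) := by
    rw [ent_eq]
    rw [Finset.sum_comm]
    apply Finset.sum_congr rfl
    intro t _
    rw [Real.negMulLog, neg_mul]
    nth_rewrite 1 [hay t]
    rw [Finset.sum_mul, ← Finset.sum_neg_distrib]
  have hsuma : ∑ s, ∑ t, a s t = 1 := by
    rw [show ∑ s, ∑ t, a s t = ∑ s, mass p X s from
      Finset.sum_congr rfl (fun s _ => (hax s).symm)]
    rw [mass_total]; exact hp1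
  have hsumpq : ∑ s, ∑ t, mass p X s * mass p Y t = 1 := by
    rw [← Finset.sum_mul_sum, mass_total, mass_total, hp1, one_mul]
  have key : ∑ s, ∑ t, -(a s t * Real.log (a s t))
      ≤ ∑ s, ∑ t, (-(a s t * Real.log (mass p X s)) + -(a s t * Real.log (mass p Y t))
          + (mass p X s * mass p Y t - a s t)) := by
    apply Finset.sum_le_sum; intro s _
    apply Finset.sum_le_sum; intro t _
    have := gibbs3' (a s t) (mass p X s) (mass p Y t) (h0 s t) (haX s t) (haY s t)
    linarith
  have expand : ∑ s, ∑ t, (-(a s t * Real.log (mass p X s)) + -(a s t * Real.log (mass p Y t))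
          + (mass p X s * mass p Y t - a s t))
      = (∑ s, ∑ t, -(a s t * Real.log (mass p X s)))
        + (∑ s, ∑ t, -(a s t * Real.log (mass p Y t)))
        + ((∑ s, ∑ t, mass p X s * mass p Y t) - ∑ s, ∑ t, a s t) := by
    simp only [Finset.sum_add_distrib, Finset.sum_sub_distrib]
  rw [e1, e2, e3]
  rw [expand, hsuma, hsumpq] at key
  linarith

/-- numeric core of strong subadditivity -/
lemma submod_core {S T U : Type*} [Fintype S] [Fintype T] [Fintype U]
    (F : S → T → U → ℝ) (hF : ∀ s t u, 0 ≤ F s t u) :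
    (∑ s, ∑ t, ∑ u, Real.negMulLog (F s t u)) + ∑ u, Real.negMulLog (∑ s, ∑ t, F s t u)
      ≤ (∑ s, ∑ u, Real.negMulLog (∑ t, F s t u))
        + ∑ t, ∑ u, Real.negMulLog (∑ s, F s t u) := by
  set b : S → U → ℝ := fun s u => ∑ t, F s t u with hbdef
  set c : T → U → ℝ := fun t u => ∑ s, F s t u with hcdef
  set d : U → ℝ := fun u => ∑ s, ∑ t, F s t u with hddef
  have hb0 : ∀ s u, 0 ≤ b s u := fun s u => Finset.sum_nonneg fun t _ => hF s t u
  have hc0 : ∀ t u, 0 ≤ c t u := fun t u => Finset.sum_nonneg fun s _ => hF s t u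
  have hFb : ∀ s t u, F s t u ≤ b s u := fun s t u =>
    Finset.single_le_sum (fun j _ => hF s j u) (Finset.mem_univ t)
  have hFc : ∀ s t u, F s t u ≤ c t u := fun s t u =>
    Finset.single_le_sum (fun j _ => hF j t u) (Finset.mem_univ s)
  have hbd : ∀ s u, b s u ≤ d u := fun s u =>
    Finset.single_le_sum (fun j _ => hb0 j u) (Finset.mem_univ s)
  have hd0 : ∀ u, 0 ≤ d u := fun u => Finset.sum_nonneg fun s _ => hb0 s u
  have hdb : ∀ u, d u = ∑ s, b s u := fun u => rfl
  have hdc : ∀ u, d u = ∑ t, c t u := fun u => Finset.sum_comm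
  have hcd : ∀ t u, c t u ≤ d u := fun t u => by
    rw [hdc u]; exact Finset.single_le_sum (fun j _ => hc0 j u) (Finset.mem_univ t)
  -- reorder to u-outermost
  rw [show (∑ s, ∑ t, ∑ u, Real.negMulLog (F s t u))
      = ∑ u, ∑ s, ∑ t, Real.negMulLog (F s t u) by
    rw [show (∑ s, ∑ t, ∑ u, Real.negMulLog (F s t u))
        = ∑ s, ∑ u, ∑ t, Real.negMulLog (F s t u) from
      Finset.sum_congr rfl fun s _ => Finset.sum_comm]
    exact Finset.sum_comm]
  rw [show (∑ s, ∑ u, Real.negMulLog (∑ t, F s t u))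
      = ∑ u, ∑ s, Real.negMulLog (b s u) from Finset.sum_comm]
  rw [show (∑ t, ∑ u, Real.negMulLog (∑ s, F s t u))
      = ∑ u, ∑ t, Real.negMulLog (c t u) from Finset.sum_comm]
  rw [← Finset.sum_add_distrib, ← Finset.sum_add_distrib]
  apply Finset.sum_le_sum
  intro u _
  rcases eq_or_lt_of_le (hd0 u) with hdu | hdu
  · -- d u = 0 : everything vanishes
    have hb0' : ∀ s, b s u = 0 := fun s => le_antisymm (hdu ▸ hbd s u) (hb0 s u)
    have hc0' : ∀ t, c t u = 0 := fun t => le_antisymm (hdu ▸ hcd t u) (hc0 t u)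
    have hF0 : ∀ s t, F s t u = 0 := fun s t =>
      le_antisymm (le_trans (hFb s t u) (le_of_eq (hb0' s))) (hF s t u)
    simp [hF0, hb0', hc0', ← hdu, Real.negMulLog]
  · -- d u > 0 : Gibbs
    have e_d : Real.negMulLog (d u) = ∑ s, ∑ t, -(F s t u * Real.log (d u)) := by
      rw [Real.negMulLog, neg_mul]
      rw [show d u * Real.log (d u) = ∑ s, ∑ t, F s t u * Real.log (d u) by
        nth_rewrite 1 [show d u = ∑ s, ∑ t, F s t u from rfl]
        rw [Finset.sum_mul]
        exact Finset.sum_congr rfl fun s _ => Finset.sum_mul _ _ _]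
      rw [← Finset.sum_neg_distrib]
      exact Finset.sum_congr rfl fun s _ => (Finset.sum_neg_distrib _).symm
    have e_b : ∑ s, Real.negMulLog (b s u) = ∑ s, ∑ t, -(F s t u * Real.log (b s u)) := by
      apply Finset.sum_congr rfl
      intro s _
      rw [Real.negMulLog, neg_mul]
      rw [show b s u * Real.log (b s u) = ∑ t, F s t u * Real.log (b s u) by
        nth_rewrite 1 [show b s u = ∑ t, F s t u from rfl]
        exact Finset.sum_mul _ _ _]
      exact (Finset.sum_neg_distrib _).symm
    have e_c : ∑ t, Real.negMulLog (c t u) = ∑ s, ∑ t, -(F s t u * Real.log (c t u)) := by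
      rw [show (∑ s, ∑ t, -(F s t u * Real.log (c t u)))
          = ∑ t, ∑ s, -(F s t u * Real.log (c t u)) from Finset.sum_comm]
      apply Finset.sum_congr rfl
      intro t _
      rw [Real.negMulLog, neg_mul]
      rw [show c t u * Real.log (c t u) = ∑ s, F s t u * Real.log (c t u) by
        nth_rewrite 1 [show c t u = ∑ s, F s t u from rfl]
        exact Finset.sum_mul _ _ _]
      exact (Finset.sum_neg_distrib _).symm
    have hcorr : ∑ s, ∑ t, (b s u * c t u / d u - F s t u) = 0 := by
      simp only [Finset.sum_sub_distrib]
      have h1 : ∑ s, ∑ t, b s u * c t u / d u = d u := by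
        rw [show (∑ s, ∑ t, b s u * c t u / d u) = (∑ s, ∑ t, b s u * c t u) / d u by
          rw [Finset.sum_div]
          exact Finset.sum_congr rfl fun s _ => (Finset.sum_div _ _ _).symm]
        rw [← Finset.sum_mul_sum, ← hdb u, ← hdc u]
        field_simp
      rw [h1]
      rw [show (∑ s, ∑ t, F s t u) = d u from rfl]
      ring
    have key : ∑ s, ∑ t, (Real.negMulLog (F s t u) + -(F s t u * Real.log (d u)))
        ≤ ∑ s, ∑ t, ((-(F s t u * Real.log (b s u)) + -(F s t u * Real.log (c t u)))
            + (b s u * c t u / d u - F s t u)) := by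
      apply Finset.sum_le_sum; intro s _
      apply Finset.sum_le_sum; intro t _
      have := gibbs4' (F s t u) (b s u) (c t u) (d u) (hF s t u) (hFb s t u) (hFc s t u) hdu
      rw [Real.negMulLog, neg_mul]
      linarith
    have expand1 : ∑ s, ∑ t, (Real.negMulLog (F s t u) + -(F s t u * Real.log (d u)))
        = (∑ s, ∑ t, Real.negMulLog (F s t u)) + ∑ s, ∑ t, -(F s t u * Real.log (d u)) := by
      simp only [Finset.sum_add_distrib]
    have expand2 : ∑ s, ∑ t, ((-(F s t u * Real.log (b s u)) + -(F s t u * Real.log (c t u)))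
            + (b s u * c t u / d u - F s t u))
        = (∑ s, ∑ t, -(F s t u * Real.log (b s u)))
          + (∑ s, ∑ t, -(F s t u * Real.log (c t u)))
          + ∑ s, ∑ t, (b s u * c t u / d u - F s t u) := by
      simp only [Finset.sum_add_distrib]
    rw [expand1, expand2, hcorr] at key
    rw [e_d, e_b, e_c]
    linarith

/-- submodularity: H(X,Y) + H(Z) ≤ H(X,Z) + H(Y,Z) -/
lemma ent_submod (p : Ω → ℝ) (hp0 : ∀ ω, 0 ≤ p ω) (X : Ω → S) (Y : Ω → T) (Z : Ω → U) :
    ent p (fun ω => (X ω, Y ω)) + ent p Z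
      ≤ ent p (fun ω => (X ω, Z ω)) + ent p (fun ω => (Y ω, Z ω)) := by
  set W : Ω → (S × T) × U := fun ω => ((X ω, Y ω), Z ω) with hWdef
  set F : S → T → U → ℝ := fun s t u => mass p W ((s, t), u) with hFdef
  have hF : ∀ s t u, 0 ≤ F s t u := fun s t u => mass_nonneg p hp0 _ _
  have exy : ent p (fun ω => (X ω, Y ω)) = ∑ s, ∑ t, Real.negMulLog (∑ u, F s t u) := by
    rw [ent_eq, Fintype.sum_prod_type]
    apply Finset.sum_congr rfl; intro s _
    apply Finset.sum_congr rfl; intro t _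
    rw [mass_fst p (fun ω => (X ω, Y ω)) Z (s, t)]
  have ez : ent p Z = ∑ u, Real.negMulLog (∑ s, ∑ t, F s t u) := by
    rw [ent_eq]
    apply Finset.sum_congr rfl; intro u _
    rw [mass_snd p (fun ω => (X ω, Y ω)) Z u, Fintype.sum_prod_type]
  have exz : ent p (fun ω => (X ω, Z ω)) = ∑ s, ∑ u, Real.negMulLog (∑ t, F s t u) := by
    rw [ent_eq, Fintype.sum_prod_type]
    apply Finset.sum_congr rfl; intro s _
    apply Finset.sum_congr rfl; intro u _
    rw [mass_fst p (fun ω => (X ω, Z ω)) Y (s, u)]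
    congr 1
    apply Finset.sum_congr rfl; intro t _
    exact mass_congr _ _ _ _ _ (fun ω => by simp only [Prod.ext_iff]; tauto)
  have eyz : ent p (fun ω => (Y ω, Z ω)) = ∑ t, ∑ u, Real.negMulLog (∑ s, F s t u) := by
    rw [ent_eq, Fintype.sum_prod_type]
    apply Finset.sum_congr rfl; intro t _
    apply Finset.sum_congr rfl; intro u _
    rw [mass_fst p (fun ω => (Y ω, Z ω)) X (t, u)]
    congr 1
    apply Finset.sum_congr rfl; intro s _
    exact mass_congr _ _ _ _ _ (fun ω => by simp only [Prod.ext_iff]; tauto)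
  have mono : ent p (fun ω => (X ω, Y ω)) ≤ ∑ s, ∑ t, ∑ u, Real.negMulLog (F s t u) := by
    rw [exy]
    apply Finset.sum_le_sum; intro s _
    apply Finset.sum_le_sum; intro t _
    exact negMulLog_sum_le' _ (fun u => hF s t u)
  have core := submod_core F hF
  rw [ez, exz, eyz]
  linarith

end Mass

section Numeric

/-- numeric triangle inequality for the normalized max-distance, assuming HY ≤ HX -/
lemma tri_aux (HX HY HZ IXY IXZ IYZ : ℝ) (hX : 0 < HX) (hY : 0 < HY) (hZ : 0 < HZ)
    (h1 : 0 ≤ IXY) (h2 : 0 ≤ IXZ) (h3 : 0 ≤ IYZ)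
    (h5 : IXZ ≤ HZ) (h7 : IYZ ≤ HZ)
    (hYX : HY ≤ HX) (hsub : IXZ + IYZ ≤ IXY + HZ) :
    1 - IXY / max HX HY ≤ (1 - IXZ / max HX HZ) + (1 - IYZ / max HY HZ) := by
  rw [max_eq_left hYX]
  rcases le_total HZ HX with hZX | hXZ
  · rw [max_eq_left hZX]
    rcases le_total HY HZ with hYZ | hZY
    · rw [max_eq_right hYZ]
      have e : (1 - IXZ / HX) + (1 - IYZ / HZ) - (1 - IXY / HX)
          = (HX * HZ + IXY * HZ - IXZ * HZ - IYZ * HX) / (HX * HZ) := by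
        field_simp; ring
      have key : 0 ≤ (1 - IXZ / HX) + (1 - IYZ / HZ) - (1 - IXY / HX) := by
        rw [e]
        apply div_nonneg _ (by positivity)
        nlinarith [mul_le_mul_of_nonneg_right hsub hZ.le,
          mul_nonneg (sub_nonneg.2 hZX) (sub_nonneg.2 h7)]
      linarith
    · rw [max_eq_left hZY]
      have e : (1 - IXZ / HX) + (1 - IYZ / HY) - (1 - IXY / HX)
          = (HX * HY + IXY * HY - IXZ * HY - IYZ * HX) / (HX * HY) := by
        field_simp; ring
      have key : 0 ≤ (1 - IXZ / HX) + (1 - IYZ / HY) - (1 - IXY / HX) := by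
        rw [e]
        apply div_nonneg _ (by positivity)
        nlinarith [mul_le_mul_of_nonneg_right hsub hY.le,
          mul_nonneg (sub_nonneg.2 hYX) (sub_nonneg.2 h7),
          mul_nonneg hX.le (sub_nonneg.2 hZY)]
      linarith
  · rw [max_eq_right hXZ, max_eq_right (le_trans hYX hXZ)]
    rcases le_total (IXZ + IYZ) HZ with hs | hs
    · have l1 : 0 ≤ IXY / HX := div_nonneg h1 hX.le
      have l2 : IXZ / HZ + IYZ / HZ ≤ 1 := by
        rw [← add_div, div_le_one hZ]; exact hs
      linarith
    · have e : (1 - IXZ / HZ) + (1 - IYZ / HZ) - (1 - IXY / HX)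
          = (HX * HZ + IXY * HZ - IXZ * HX - IYZ * HX) / (HX * HZ) := by
        field_simp; ring
      have key : 0 ≤ (1 - IXZ / HZ) + (1 - IYZ / HZ) - (1 - IXY / HX) := by
        rw [e]
        apply div_nonneg _ (by positivity)
        nlinarith [mul_le_mul_of_nonneg_right hsub hZ.le,
          mul_nonneg (sub_nonneg.2 hs) (sub_nonneg.2 hXZ)]
      linarith

lemma tri (HX HY HZ IXY IXZ IYZ : ℝ) (hX : 0 < HX) (hY : 0 < HY) (hZ : 0 < HZ)
    (h1 : 0 ≤ IXY) (h2 : 0 ≤ IXZ) (h3 : 0 ≤ IYZ)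
    (h5 : IXZ ≤ HZ) (h7 : IYZ ≤ HZ)
    (hsub : IXZ + IYZ ≤ IXY + HZ) :
    1 - IXY / max HX HY ≤ (1 - IXZ / max HX HZ) + (1 - IYZ / max HY HZ) := by
  rcases le_total HY HX with h | h
  · exact tri_aux HX HY HZ IXY IXZ IYZ hX hY hZ h1 h2 h3 h5 h7 h hsub
  · have := tri_aux HY HX HZ IXY IYZ IXZ hY hX hZ h1 h3 h2 h7 h5 h (by linarith)
    rw [max_comm HY HX] at this
    linarith

lemma endgame (α HX HY HZ IXY IXZ IYZ : ℝ)
    (hα0 : 0 < α) (hα1 : α < 1) (hX : 0 < HX) (hY : 0 < HY) (hZ : 0 < HZ)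
    (hIXY0 : 0 ≤ IXY) (hIXZ0 : 0 ≤ IXZ) (hIYZ0 : 0 ≤ IYZ)
    (hIXZ1 : IXZ ≤ HX) (hIXZ2 : IXZ ≤ HZ)
    (hIYZ1 : IYZ ≤ HY) (hIYZ2 : IYZ ≤ HZ)
    (hsub : IXZ + IYZ ≤ IXY + HZ) :
    α * (1 - IXY / min HX HY) + (1 - α) * (1 - IXY / max HX HY)
      ≤ (1 / min α (1 - α)) *
        ((α * (1 - IXZ / min HX HZ) + (1 - α) * (1 - IXZ / max HX HZ))
          + (α * (1 - IYZ / min HY HZ) + (1 - α) * (1 - IYZ / max HY HZ))) := by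
  set m := min α (1 - α) with hm
  have hm0 : 0 < m := lt_min hα0 (by linarith)
  have hmα : m ≤ α := min_le_left _ _
  have hmβ : m ≤ 1 - α := min_le_right _ _
  -- step 1: LHS ≤ 1 - IXY / max HX HY
  have hminXY : 0 < min HX HY := lt_min hX hY
  have hmaxXY : min HX HY ≤ max HX HY := min_le_max
  have hdivXY : IXY / max HX HY ≤ IXY / min HX HY :=
    div_le_div_of_nonneg_left hIXY0 hminXY hmaxXY
  have step1 : α * (1 - IXY / min HX HY) + (1 - α) * (1 - IXY / max HX HY)
      ≤ 1 - IXY / max HX HY := by nlinarith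
  -- step 2: triangle
  have step2 := tri HX HY HZ IXY IXZ IYZ hX hY hZ hIXY0 hIXZ0 hIYZ0 hIXZ2 hIYZ2 hsub
  -- step 3 for XZ
  have sXZ : m * (1 - IXZ / max HX HZ)
      ≤ α * (1 - IXZ / min HX HZ) + (1 - α) * (1 - IXZ / max HX HZ) := by
    have hu : 0 ≤ 1 - IXZ / min HX HZ := by
      have : IXZ / min HX HZ ≤ 1 := by
        rw [div_le_one (lt_min hX hZ)]; exact le_min hIXZ1 hIXZ2
      linarith
    have hv : 0 ≤ 1 - IXZ / max HX HZ := by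
      have : IXZ / max HX HZ ≤ 1 := by
        rw [div_le_one (lt_of_lt_of_le hX (le_max_left _ _))]
        exact le_trans hIXZ1 (le_max_left _ _)
      linarith
    nlinarith
  have sYZ : m * (1 - IYZ / max HY HZ)
      ≤ α * (1 - IYZ / min HY HZ) + (1 - α) * (1 - IYZ / max HY HZ) := by
    have hu : 0 ≤ 1 - IYZ / min HY HZ := by
      have : IYZ / min HY HZ ≤ 1 := by
        rw [div_le_one (lt_min hY hZ)]; exact le_min hIYZ1 hIYZ2
      linarith
    have hv : 0 ≤ 1 - IYZ / max HY HZ := by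
      have : IYZ / max HY HZ ≤ 1 := by
        rw [div_le_one (lt_of_lt_of_le hY (le_max_left _ _))]
        exact le_trans hIYZ1 (le_max_left _ _)
      linarith
    nlinarith
  -- combine
  have final : m * (α * (1 - IXY / min HX HY) + (1 - α) * (1 - IXY / max HX HY))
      ≤ (α * (1 - IXZ / min HX HZ) + (1 - α) * (1 - IXZ / max HX HZ))
        + (α * (1 - IYZ / min HY HZ) + (1 - α) * (1 - IYZ / max HY HZ)) := by
    nlinarith [mul_le_mul_of_nonneg_left step1 hm0.le, mul_le_mul_of_nonneg_left step2 hm0.le]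
  rw [div_mul_eq_mul_div, le_div_iff₀ hm0]
  linarith [final]

end Numeric

end AuxNIBD

theorem NIBD_relaxed_triangle {Ω S T U : Type*} [Fintype Ω] [Fintype S] [Fintype T]
    [Fintype U] [DecidableEq S] [DecidableEq T] [DecidableEq U]
    (p : Ω → ℝ) (hp0 : ∀ ω, 0 ≤ p ω) (hp1 : ∑ ω, p ω = 1)
    (α : ℝ) (hα0 : 0 < α) (hα1 : α < 1)
    (X : Ω → S) (Y : Ω → T) (Z : Ω → U)
    (hX : 0 < ent p X) (hY : 0 < ent p Y) (hZ : 0 < ent p Z) :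
    NIBD α p X Y ≤ (1 / min α (1 - α)) * (NIBD α p X Z + NIBD α p Y Z) := by
  have hIXY0 : 0 ≤ mutualInfo p X Y := by
    unfold mutualInfo; linarith [ent_pair_le_add p hp0 hp1 X Y]
  have hIXZ0 : 0 ≤ mutualInfo p X Z := by
    unfold mutualInfo; linarith [ent_pair_le_add p hp0 hp1 X Z]
  have hIYZ0 : 0 ≤ mutualInfo p Y Z := by
    unfold mutualInfo; linarith [ent_pair_le_add p hp0 hp1 Y Z]
  have hIXZ1 : mutualInfo p X Z ≤ ent p X := by
    unfold mutualInfo; linarith [ent_le_ent_pair_right p hp0 X Z]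
  have hIXZ2 : mutualInfo p X Z ≤ ent p Z := by
    unfold mutualInfo; linarith [ent_le_ent_pair_left p hp0 X Z]
  have hIYZ1 : mutualInfo p Y Z ≤ ent p Y := by
    unfold mutualInfo; linarith [ent_le_ent_pair_right p hp0 Y Z]
  have hIYZ2 : mutualInfo p Y Z ≤ ent p Z := by
    unfold mutualInfo; linarith [ent_le_ent_pair_left p hp0 Y Z]
  have hsub : mutualInfo p X Z + mutualInfo p Y Z ≤ mutualInfo p X Y + ent p Z := by
    unfold mutualInfo; linarith [ent_submod p hp0 X Y Z]
  unfold NIBD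
  exact endgame α (ent p X) (ent p Y) (ent p Z) (mutualInfo p X Y) (mutualInfo p X Z)
    (mutualInfo p Y Z) hα0 hα1 hX hY hZ hIXY0 hIXZ0 hIYZ0 hIXZ1 hIXZ2 hIYZ1 hIYZ2 hsub
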